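/- Let E be a real Hilbert space, ψ : E → ℝ a differentiable 1-strongly convex function, and W ⊆ E a nonempty closed convex set. Let η > 0, G > 0, let w ∈ W and g ∈ E with ‖g‖ ≤ G, let v ∈ E satisfy ∇ψ(v) = ∇ψ(w) − η·g, and let w⁺ ∈ W be a Bregman projection of v onto W, i.e. Δψ(w⁺, v) ≤ Δψ(x, v) for all x ∈ W. Then for every w* ∈ W, ⟪w − w*, g⟫ ≤ (1/η)·(Δψ(w*, w) − Δψ(w*, w⁺)) + η·G²/2. -/

import Mathlib

open RealInnerProductSpace

private lemma deriv_nonneg_of_min (F : ℝ → ℝ) (c : ℝ) (hF : HasDerivAt F c 0)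
    (hmin : ∀ t ∈ Set.Ioc (0:ℝ) 1, F 0 ≤ F t) : 0 ≤ c := by
  have h := hF.hasDerivWithinAt (s := Set.Ioi (0:ℝ))
  rw [hasDerivWithinAt_iff_tendsto_slope] at h
  have hs : Set.Ioi (0:ℝ) \ {0} = Set.Ioi 0 :=
    Set.diff_singleton_eq_self (by simp)
  rw [hs] at h
  refine ge_of_tendsto h ?_
  filter_upwards [Ioc_mem_nhdsGT_of_mem (by constructor <;> norm_num : (0:ℝ) ∈ Set.Ico (0:ℝ) 1)]
    with t ht
  have h1 : 0 < t := ht.1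
  have h2 : F 0 ≤ F t := hmin t ht
  rw [slope_def_field]
  have : (F t - F 0) / (t - 0) ≥ 0 := div_nonneg (by linarith) (by linarith)
  simpa [slope_def_field, div_eq_inv_mul] using this

/-- **Per-step regret inequality of online mirror descent.** With `ψ` differentiable
and 1-strongly convex, `w ∈ W`, `‖g‖ ≤ G`, `∇ψ(v) = ∇ψ(w) - η·g`, and `w⁺ ∈ W` a
Bregman projection of `v` onto `W`, for every `w* ∈ W`:
`⟪w - w*, g⟫ ≤ (1/η)·(Δψ(w*, w) - Δψ(w*, w⁺)) + η·G²/2`. -/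
theorem mirror_descent_per_step_regret
    {E : Type*} [NormedAddCommGroup E] [InnerProductSpace ℝ E] [CompleteSpace E]
    (ψ : E → ℝ) (ψ' : E → E) (hψ : ∀ x, HasGradientAt ψ (ψ' x) x)
    (hsc : ∀ x y : E, ψ x + ⟪ψ' x, y - x⟫ + ‖y - x‖ ^ 2 / 2 ≤ ψ y)
    (W : Set E) (hWne : W.Nonempty) (hWcl : IsClosed W) (hWconv : Convex ℝ W)
    (Dψ : E → E → ℝ) (hD : ∀ x y, Dψ x y = ψ x - ψ y - ⟪ψ' y, x - y⟫)
    (η G : ℝ) (hη : 0 < η) (hG : 0 < G)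
    (w : E) (hwW : w ∈ W)
    (g : E) (hg : ‖g‖ ≤ G)
    (v : E) (hupd : ψ' v = ψ' w - η • g)
    (wplus : E) (hwplusW : wplus ∈ W)
    (hproj : ∀ x ∈ W, Dψ wplus v ≤ Dψ x v) :
    ∀ wstar ∈ W,
      ⟪w - wstar, g⟫ ≤ (1 / η) * (Dψ wstar w - Dψ wstar wplus) + η * G ^ 2 / 2 := by
  intro wstar hws
  set u := wstar - wplus with hu
  -- variational inequality via derivative at 0
  have hd : 0 ≤ ⟪ψ' wplus - ψ' v, u⟫ := by
    have hγ : HasDerivAt (fun t : ℝ => wplus + t • u) u 0 := by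
      simpa using ((hasDerivAt_id (0:ℝ)).smul_const u).const_add wplus
    have hfd : HasFDerivAt ψ (InnerProductSpace.toDual ℝ E (ψ' wplus)) (wplus + (0:ℝ) • u) := by
      simpa using (hψ wplus).hasFDerivAt
    have hc : HasDerivAt (fun t : ℝ => ψ (wplus + t • u)) ⟪ψ' wplus, u⟫ 0 := by
      have := hfd.comp_hasDerivAt 0 hγ
      simpa [InnerProductSpace.toDual_apply_apply, Function.comp_def] using this
    have heq : (fun t : ℝ => Dψ (wplus + t • u) v)
        = fun t : ℝ => ψ (wplus + t • u) - ψ v - (⟪ψ' v, wplus - v⟫ + t * ⟪ψ' v, u⟫) := by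
      funext t
      rw [hD]
      have : ⟪ψ' v, wplus + t • u - v⟫ = ⟪ψ' v, wplus - v⟫ + t * ⟪ψ' v, u⟫ := by
        rw [show wplus + t • u - v = (wplus - v) + t • u by abel, inner_add_right,
          real_inner_smul_right]
      rw [this]
    have hF : HasDerivAt (fun t : ℝ => Dψ (wplus + t • u) v) ⟪ψ' wplus - ψ' v, u⟫ 0 := by
      rw [heq]
      have h2 : HasDerivAt (fun t : ℝ => ⟪ψ' v, wplus - v⟫ + t * ⟪ψ' v, u⟫) ⟪ψ' v, u⟫ 0 :=
        (hasDerivAt_mul_const _).const_add _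
      have := (hc.sub_const (ψ v)).sub h2
      simpa [inner_sub_left, Pi.sub_def] using this
    refine deriv_nonneg_of_min _ _ hF ?_
    intro t ht
    have hmem : wplus + t • u ∈ W :=
      hWconv.add_smul_sub_mem hwplusW hws ⟨le_of_lt ht.1, ht.2⟩
    have h0 : Dψ (wplus + (0:ℝ) • u) v = Dψ wplus v := by norm_num
    rw [h0]
    exact hproj _ hmem
  have hηg : ψ' w - ψ' v = η • g := by rw [hupd]; abel
  have h1 : η * ⟪g, w - wstar⟫ = ⟪ψ' w - ψ' v, w - wstar⟫ := by
    rw [hηg, real_inner_smul_left]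
  have h2 : η * ⟪g, w - wplus⟫ = ⟪ψ' w - ψ' v, w - wplus⟫ := by
    rw [hηg, real_inner_smul_left]
  have key : η * ⟪g, w - wstar⟫ = η * ⟪g, w - wplus⟫
      + (Dψ wstar w - Dψ wstar wplus - Dψ wplus w) - ⟪ψ' wplus - ψ' v, u⟫ := by
    rw [h1, h2, hD, hD, hD, hu]
    simp only [inner_sub_left, inner_sub_right]
    ring
  have hsc1 : ‖wplus - w‖ ^ 2 / 2 ≤ Dψ wplus w := by
    have := hsc w wplus
    rw [hD]
    linarith
  have hcs : η * ⟪g, w - wplus⟫ ≤ η ^ 2 * G ^ 2 / 2 + ‖wplus - w‖ ^ 2 / 2 := by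
    have hip : ⟪g, w - wplus⟫ ≤ ‖g‖ * ‖w - wplus‖ := real_inner_le_norm _ _
    have hnn : ‖w - wplus‖ = ‖wplus - w‖ := norm_sub_rev _ _
    have s1 : η * ⟪g, w - wplus⟫ ≤ η * (‖g‖ * ‖w - wplus‖) :=
      mul_le_mul_of_nonneg_left hip hη.le
    have s2 : ‖g‖ * ‖w - wplus‖ ≤ G * ‖w - wplus‖ :=
      mul_le_mul_of_nonneg_right hg (norm_nonneg _)
    nlinarith [sq_nonneg (η * G - ‖w - wplus‖), norm_nonneg (w - wplus), hη.le]
  have hfinal : η * ⟪g, w - wstar⟫ ≤ (Dψ wstar w - Dψ wstar wplus) + η ^ 2 * G ^ 2 / 2 := by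
    linarith
  have hcomm : ⟪w - wstar, g⟫ = ⟪g, w - wstar⟫ := real_inner_comm _ _
  rw [hcomm]
  have hmul : η * ((1 / η) * (Dψ wstar w - Dψ wstar wplus) + η * G ^ 2 / 2)
      = (Dψ wstar w - Dψ wstar wplus) + η ^ 2 * G ^ 2 / 2 := by
    field_simp
  exact le_of_mul_le_mul_left (by rw [hmul]; linarith) hη
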